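/- Let V be a ℤ-graded vector space. The coproduct Δ on V[1]⊗S(V[1]) defined by Δ(x⊗1) = 0 and Δ(x_0⊗x_1⋯x_n) = Σ_{0≤k≤n-1, σ∈Sh_{k,1,n-k-1}} ε_x(σ) x_0⊗(x_{σ(1)}⋯x_{σ(k)}) ⊗ x_{σ(k+1)}⊗(x_{σ(k+2)}⋯x_{σ(n)}) satisfies the permutative cogebra identity (id⊗Δ)∘Δ = τ_{23}∘(id⊗Δ)∘Δ. -/

import Mathlib

noncomputable section
namespace PG

open Finsupp

/-- Free `K`-module on the type `α`. -/
abbrev FM (K : Type) [Field K] (α : Type) : Type := α →₀ K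

variable {K : Type} [Field K] {ι : Type}

/-- linear extension of a map defined on the canonical basis -/
def extL {α β : Type} (f : α → FM K β) : FM K α →ₗ[K] FM K β :=
  Finsupp.lift (FM K β) K α f

/-- the sign `(-1)^n` -/
def zsgn (K : Type) [Field K] (n : ℤ) : K := (-1 : K) ^ n

/-- sum of degrees of the entries of a list -/
def dsum {α : Type} (dg : α → ℤ) (l : List α) : ℤ := (l.map dg).sum

/-- enumerate the positions of a list: (prefix, element, suffix) -/
def focuses {α : Type} : List α → List (List α × α × List α)
  | [] => []
  | a :: l => ([], a, l) :: (focuses l).map (fun t => (a :: t.1, t.2.1, t.2.2))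

/-- sum of the values of `f` over a list -/
def fsum {α β : Type} [AddCommMonoid β] (l : List α) (f : α → β) : β := (l.map f).sum

/-- all splittings of a list into two complementary subsequences (I, J),
together with the Koszul sign of the corresponding unshuffle -/
def splits {α : Type} (K : Type) [Field K] (dg : α → ℤ) :
    List α → List (List α × List α × K)
  | [] => [([], [], 1)]
  | a :: l =>
      ((splits K dg l).map (fun t => (a :: t.1, t.2.1, t.2.2)))
      ++ ((splits K dg l).map
          (fun t => (t.1, a :: t.2.1, zsgn K (dg a * dsum dg t.1) * t.2.2)))

/-- `x₁⋯xₙ ↦ Σ_t ± xₜ ⊗ (x₁⋯ x̂ₜ ⋯xₙ)` : canonical embedding of a symmetric word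
into (generator) × (symmetric word), with Koszul signs. -/
def symEmb {α : Type} (K : Type) [Field K] (dg : α → ℤ) : List α → FM K (α × List α)
  | [] => 0
  | a :: l => Finsupp.single (a, l) 1
      + (symEmb K dg l).sum
          (fun b c => (c * zsgn K (dg b.1 * dg a)) • Finsupp.single (b.1, a :: b.2) 1)

/-- the cofree permutative coproduct on (head) ⊗ (symmetric word):
`Δ(x₀ ⊗ x₁⋯xₙ) = Σ_{I ⊔ J, J≠∅} ε (x₀ ⊗ x_I) ⊗ x_J` (second factor expanded by `symEmb`). -/
def permDelta {α : Type} (K : Type) [Field K] (dg : α → ℤ) (b : α × List α) :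
    FM K ((α × List α) × (α × List α)) :=
  fsum (splits K dg b.2) (fun t =>
    match t.2.1 with
    | [] => 0
    | _ => t.2.2 • Finsupp.mapDomain (fun e => ((b.1, t.1), e)) (symEmb K dg t.2.1))

/-- the graded (Koszul-signed) shuffle product on words -/
def shf (K : Type) [Field K] (ds : ι → ℤ) : List ι → List ι → FM K (List ι)
  | [], v => Finsupp.single v 1
  | u, [] => Finsupp.single u 1
  | a :: u, b :: v =>
      Finsupp.mapDomain (a :: ·) (shf K ds u (b :: v))
      + zsgn K (ds b * dsum ds (a :: u)) • Finsupp.mapDomain (b :: ·) (shf K ds (a :: u) v)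
  termination_by u v => u.length + v.length

/-- the iterated signed antisymmetrisation μₙ : μ₁ = id,
μ_{n+1} = μ_n ⊗ id − (μ_n ⊗ id) ∘ τ_{n+1}⁻¹ (Koszul-signed cyclic action). -/
def mu (K : Type) [Field K] (ds : ι → ℤ) : List ι → FM K (List ι)
  | [] => 0
  | [a] => Finsupp.single [a] 1
  | a :: b :: l =>
      Finsupp.mapDomain (fun w => w ++ [(b :: l).getLast (List.cons_ne_nil _ _)])
        (mu K ds ((a :: b :: l).dropLast))
      - zsgn K (ds a * dsum ds (b :: l)) •
          Finsupp.mapDomain (fun w => w ++ [a]) (mu K ds (b :: l))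
  termination_by w => w.length
  decreasing_by
  · simp
  · simp

/-- prepend a general vector (an element of the free module on `ι`) to words -/
def consV (g : FM K ι) (m : FM K (List ι)) : FM K (List ι) :=
  g.sum fun i c => c • Finsupp.mapDomain (i :: ·) m

/-- the nontrivial deconcatenations of a word -/
def cuts {α : Type} (w : List α) : List (List α × List α) :=
  (List.range (w.length - 1)).map (fun k => (w.take (k + 1), w.drop (k + 1)))

/-- the Koszul crossing exponent of a list of positions (each position `i`
carries the degree `degs i`): sum over inversions of products of degrees. -/
def crossExp (degs : ℕ → ℤ) : List ℕ → ℤ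
  | [] => 0
  | a :: l => ((l.filter (fun b => decide (b < a))).map (fun b => degs a * degs b)).sum
      + crossExp degs l

/-- degree of the letter at position `i` of the word `w` -/
def posDeg (ds : ι → ℤ) (w : List ι) (i : ℕ) : ℤ := (w.map ds).getD i 0

/-- subword of `w` on the set of positions `S` (kept in increasing order) -/
def subw (w : List ι) (S : Finset ℕ) : List ι :=
  ((w.zipIdx.map Prod.swap).filter (fun p => decide (p.1 ∈ S))).map Prod.snd

/-- the Koszul sign of the unshuffle of `w` rearranging its letters in the
order of positions given by `out` -/
def unshSgn (K : Type) [Field K] (ds : ι → ℤ) (w : List ι) (out : List ℕ) : K :=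
  zsgn K (crossExp (posDeg ds w) out)

/-- submodule spanned by a set of relations -/
def idealOf {α : Type} (S : Set (FM K α)) : Submodule K (FM K α) := Submodule.span K S

/-- the span, in the free module on `α × α`, of the relations of `S` put in either factor -/
def idealPair {α : Type} (S : Set (FM K α)) : Submodule K (FM K (α × α)) :=
  Submodule.span K
    ({x | ∃ c, ∃ p ∈ S, x = Finsupp.mapDomain (fun a => (a, c)) p} ∪
     {x | ∃ c, ∃ p ∈ S, x = Finsupp.mapDomain (fun a => (c, a)) p})

/-- the span, in the free module on `α × α × α`, of the relations of `S` put in any factor -/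
def idealTriple {α : Type} (S : Set (FM K α)) : Submodule K (FM K (α × α × α)) :=
  Submodule.span K
    ({x | ∃ c d, ∃ p ∈ S, x = Finsupp.mapDomain (fun a => (a, c, d)) p} ∪
     ({x | ∃ c d, ∃ p ∈ S, x = Finsupp.mapDomain (fun a => (c, a, d)) p} ∪
      {x | ∃ c d, ∃ p ∈ S, x = Finsupp.mapDomain (fun a => (c, d, a)) p}))

/-- graded-symmetry relations on words: `⋯ab⋯ − (−1)^{deg a · deg b} ⋯ba⋯` -/
def symRelW (K : Type) [Field K] (ds : ι → ℤ) : Set (FM K (List ι)) :=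
  {x | ∃ u : List ι, ∃ a b : ι, ∃ v : List ι,
    x = Finsupp.single (u ++ a :: b :: v) 1
      - zsgn K (ds a * ds b) • Finsupp.single (u ++ b :: a :: v) 1}

/-- shuffle relations: the images of all the shuffle products `sh_{p,q}`, `p,q ≥ 1` -/
def shRel (K : Type) [Field K] (ds : ι → ℤ) : Set (FM K (List ι)) :=
  {x | ∃ u v : List ι, u ≠ [] ∧ v ≠ [] ∧ x = shf K ds u v}

/-- graded-symmetry relations in the `List` (symmetric-word) part of `α × List α` -/
def symRelP {α : Type} (K : Type) [Field K] (dg : α → ℤ) : Set (FM K (α × List α)) :=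
  {x | ∃ h : α, ∃ l1 : List α, ∃ u v : α, ∃ l2 : List α,
    x = Finsupp.single (h, l1 ++ u :: v :: l2) 1
      - zsgn K (dg u * dg v) • Finsupp.single (h, l1 ++ v :: u :: l2) 1}

/-- the graded flip on the free module on `α × α` -/
def tauP {α : Type} (K : Type) [Field K] (dg : α → ℤ) :
    FM K (α × α) →ₗ[K] FM K (α × α) :=
  extL (fun p => zsgn K (dg p.1 * dg p.2) • Finsupp.single (p.2, p.1) 1)

/-- τ₁₂ = τ ⊗ id on triples -/
def tau12 {α : Type} (K : Type) [Field K] (dg : α → ℤ) :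
    FM K (α × α × α) →ₗ[K] FM K (α × α × α) :=
  extL (fun p => zsgn K (dg p.1 * dg p.2.1) • Finsupp.single (p.2.1, p.1, p.2.2) 1)

/-- τ₂₃ = id ⊗ τ on triples -/
def tau23 {α : Type} (K : Type) [Field K] (dg : α → ℤ) :
    FM K (α × α × α) →ₗ[K] FM K (α × α × α) :=
  extL (fun p => zsgn K (dg p.2.1 * dg p.2.2) • Finsupp.single (p.1, p.2.2, p.2.1) 1)

/-- `f ⊗ id` for a map `f` with values in two factors (no Koszul sign) -/
def firstT {α : Type} (f : α → FM K (α × α)) :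
    FM K (α × α) →ₗ[K] FM K (α × α × α) :=
  extL (fun p => Finsupp.mapDomain (fun q => (q.1, q.2, p.2)) (f p.1))

/-- `id ⊗ f` for a map `f` of degree `degf` with values in two factors (Koszul sign) -/
def secondT {α : Type} (dg : α → ℤ) (degf : ℤ) (f : α → FM K (α × α)) :
    FM K (α × α) →ₗ[K] FM K (α × α × α) :=
  extL (fun p => zsgn K (degf * dg p.1) •
    Finsupp.mapDomain (fun q => (p.1, q.1, q.2)) (f p.2))

/-- `f ⊗ id + id ⊗ f` for a coderivation-type map `f` of degree `degf` (Koszul sign) -/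
def coderT {α : Type} (dg : α → ℤ) (degf : ℤ) (f : α → FM K α) :
    FM K (α × α) →ₗ[K] FM K (α × α) :=
  extL (fun p => Finsupp.mapDomain (fun q => (q, p.2)) (f p.1)
      + zsgn K (degf * dg p.1) • Finsupp.mapDomain (fun q => (p.1, q)) (f p.2))

/-- homogeneity of an element of the free module on `α`, w.r.t. a degree on `α` -/
def IsHomog {α : Type} (dg : α → ℤ) (x : FM K α) (n : ℤ) : Prop :=
  ∀ a ∈ x.support, dg a = n


/-! ### coproducts on words -/

/-- the unshuffle coproduct of the cocommutative coassociative cogebra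
`S⁺(g[1])` (on word representatives):
`Δ(x₁⋯xₙ) = Σ_{I⊔J=[n], I,J≠∅} ε_x(I,J) x_I ⊗ x_J`. -/
def sDelta (K : Type) [Field K] (ds : ι → ℤ) (w : List ι) : FM K (List ι × List ι) :=
  ∑ S ∈ (Finset.range w.length).powerset.filter
      (fun S => S ≠ ∅ ∧ S ≠ Finset.range w.length),
    unshSgn K ds w
        (S.sort (· ≤ ·) ++ ((Finset.range w.length \ S).sort (· ≤ ·))) •
      Finsupp.single (subw w S, subw w (Finset.range w.length \ S)) 1

/-- the antisymmetrised deconcatenation cocrochet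
`δ(x₁⊗…⊗xₙ) = Σ_j (x₁…x_j) ⊗ (x_{j+1}…xₙ) − ε (x_{j+1}…xₙ) ⊗ (x₁…x_j)`. -/
def lieDelta (K : Type) [Field K] (ds : ι → ℤ) (w : List ι) :
    FM K (List ι × List ι) :=
  fsum (cuts w) (fun p =>
    Finsupp.single p 1
      - zsgn K (dsum ds p.1 * dsum ds p.2) • Finsupp.single (p.2, p.1) 1)

/-- the cofree Leibniz cogebra coproduct on `T⁺(V[1])`:
`δ(x₁⊗…⊗xₙ) = Σ_k (x₁⊗…⊗x_k) ⊗ μ_{n-k}(x_{k+1}⊗…⊗xₙ)`. -/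
def leibDelta (K : Type) [Field K] (ds : ι → ℤ) (w : List ι) :
    FM K (List ι × List ι) :=
  fsum (cuts w) (fun p => Finsupp.mapDomain (fun m => (p.1, m)) (mu K ds p.2))

/-! ### coderivation-type operators on words -/

/-- `Σ_k ± x₁⊗…⊗q₁(x_k)⊗…⊗xₙ` with Koszul prefix signs `(-1)^{Σ_{i<k} deg xᵢ}` -/
def repl1 (K : Type) [Field K] (ds : ι → ℤ) (q1 : ι → FM K ι) :
    List ι → FM K (List ι)
  | [] => 0
  | a :: l => (q1 a).sum (fun i c => c • Finsupp.single (i :: l) 1)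
      + zsgn K (ds a) • Finsupp.mapDomain (a :: ·) (repl1 K ds q1 l)

/-- `Σ_k ± x₁⊗…⊗q₂(x_k,x_{k+1})⊗…⊗xₙ` (collapse of every adjacent pair) with
Koszul prefix signs -/
def repl2 (K : Type) [Field K] (ds : ι → ℤ) (q2 : ι → ι → FM K ι) :
    List ι → FM K (List ι)
  | [] => 0
  | [_] => 0
  | a :: b :: l => (q2 a b).sum (fun i c => c • Finsupp.single (i :: l) 1)
      + zsgn K (ds a) • Finsupp.mapDomain (a :: ·) (repl2 K ds q2 (b :: l))

/-- collapse the leading pair with `q2h`, and every interior pair with `q2i` -/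
def headInt (K : Type) [Field K] (ds : ι → ℤ) (q2h q2i : ι → ι → FM K ι) :
    List ι → FM K (List ι)
  | [] => 0
  | [_] => 0
  | a :: b :: l => (q2h a b).sum (fun i c => c • Finsupp.single (i :: l) 1)
      + zsgn K (ds a) • Finsupp.mapDomain (a :: ·) (repl2 K ds q2i (b :: l))

/-- `D₂(α,β) = (−1)^{deg α} α∧β` on basis letters -/
def d2of (K : Type) [Field K] (ds : ι → ℤ) (w2 : ι → ι → FM K ι) (a b : ι) : FM K ι :=
  zsgn K (ds a) • w2 a b

/-- `D₂∘μ₂(α,β) = D₂(α,β) − (−1)^{deg α · deg β} D₂(β,α)` on basis letters -/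
def d2mu (K : Type) [Field K] (ds : ι → ℤ) (w2 : ι → ι → FM K ι) (a b : ι) : FM K ι :=
  d2of K ds w2 a b - zsgn K (ds a * ds b) • d2of K ds w2 b a

/-- the codifferential of the Leibniz cogebra `T⁺(𝒢[1])` determined by a product
`∧` (no differential part):
`D(α₁⊗…⊗αₙ) = D₂(α₁,α₂)⊗α₃⊗…⊗αₙ + Σ_k ± α₁⊗…⊗(D₂∘μ₂)(α_k,α_{k+1})⊗…⊗αₙ` -/
def Dpre (K : Type) [Field K] (ds : ι → ℤ) (w2 : ι → ι → FM K ι) :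
    List ι → FM K (List ι) :=
  headInt K ds (d2of K ds w2) (d2mu K ds w2)

/-! ### the extended bracket and the extension `R₂` of a pre-Lie product -/

/-- the extension of a degree −1 bracket `b2` to words:
`[X,Y] = Σ_{shuffles, adjacent pair (x from X, y from Y)} ± …⊗[x,y]⊗…` -/
def brS (K : Type) [Field K] (ds : ι → ℤ) (b2 : ι → ι → FM K ι) :
    List ι → List ι → FM K (List ι)
  | [], _ => 0
  | _, [] => 0
  | a :: u, b :: v =>
      Finsupp.mapDomain (a :: ·) (brS K ds b2 u (b :: v))
      + zsgn K (ds b * dsum ds (a :: u)) •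
          Finsupp.mapDomain (b :: ·) (brS K ds b2 (a :: u) v)
      + zsgn K (ds b * dsum ds u) • consV (b2 a b) (shf K ds u v)
  termination_by u v => u.length + v.length

/-- the bracketed tail terms of `R₂`:
`Σ_k u₁⊗…⊗u_{k-1}⊗[u_k,b]⊗sh(u_{k+1}…, v)` with signs -/
def r2brTail (K : Type) [Field K] (ds : ι → ℤ) (b2 : ι → ι → FM K ι) :
    List ι → ι → List ι → FM K (List ι)
  | [], _, _ => 0
  | x :: u, b, v =>
      zsgn K (ds b * dsum ds u) • consV (b2 x b) (shf K ds u v)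
      + Finsupp.mapDomain (x :: ·) (r2brTail K ds b2 u b v)

/-- `[α,β] = α◇β − (−1)^{deg α · deg β} β◇α` on basis letters -/
def brOf (K : Type) [Field K] (ds : ι → ℤ) (dia2 : ι → ι → FM K ι) (a b : ι) : FM K ι :=
  dia2 a b - zsgn K (ds a * ds b) • dia2 b a

/-- the extension `R₂` of the pre-Lie product `◇` to `T⁺(𝒢[1])`:
`R₂(α₁⊗…⊗αₚ, α_{p+1}⊗…⊗α_{p+q}) = ±(α₁◇α_{p+1})⊗sh(…) + Σ_k ± α₁⊗…⊗[α_k,α_{p+1}]⊗sh(…)` -/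
def R2w (K : Type) [Field K] (ds : ι → ℤ) (dia2 : ι → ι → FM K ι) :
    List ι → List ι → FM K (List ι)
  | [], _ => 0
  | _, [] => 0
  | a :: u, b :: v =>
      zsgn K (ds b * dsum ds u) • consV (dia2 a b) (shf K ds u v)
      + Finsupp.mapDomain (a :: ·) (r2brTail K ds (brOf K ds dia2) u b v)


/-! ### the construction on `H[1] ⊗ S(H[1])`, where `H = T⁺(𝒢[1])` -/

/-- the twice-shifted degree `deg'(X) = deg(X) − 1` of a word `X ∈ H[1]` -/
def dgp (ds : ι → ℤ) (w : List ι) : ℤ := dsum ds w - 1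

/-- basis of (word representatives of) `H[1] ⊗ S(H[1])` : a head word and a
list of factor words -/
abbrev BB (ι : Type) : Type := List ι × List (List ι)

/-- the `deg'`-degree of a basis element of `H[1] ⊗ S(H[1])` -/
def degB (ds : ι → ℤ) (b : BB ι) : ℤ := dgp ds b.1 + dsum (dgp ds) b.2

/-- embed a symmetric product whose first factor is a general element of `H` -/
def symEmbV (K : Type) [Field K] (ds : ι → ℤ) (g : FM K (List ι))
    (L : List (List ι)) : FM K (BB ι) :=
  g.sum fun w c => c • symEmb K (dgp ds) (w :: L)

/-- the coderivation `m` of `H[1] ⊗ S(H[1])` extending the codifferential `D` of `H`: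
`m(X₀⊗X₁⋯Xₙ) = D(X₀)⊗X₁⋯Xₙ + (−1)^{x₀'} Σ_j ± X₀⊗D(X_j)·X₁⋯ĵ⋯Xₙ` -/
def mB (K : Type) [Field K] (ds : ι → ℤ) (w2 : ι → ι → FM K ι) (b : BB ι) :
    FM K (BB ι) :=
  (Dpre K ds w2 b.1).sum (fun w c => c • Finsupp.single (w, b.2) 1)
  + zsgn K (dgp ds b.1) • fsum (focuses b.2) (fun t =>
      zsgn K (dgp ds t.2.1 * dsum (dgp ds) t.1) •
        (Dpre K ds w2 t.2.1).sum
          (fun w c => c • Finsupp.single (b.1, w :: (t.1 ++ t.2.2)) 1))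

/-- `R₂'(X,Y) = (−1)^{deg' X} R₂(X,Y)` -/
def R2p (K : Type) [Field K] (ds : ι → ℤ) (dia2 : ι → ι → FM K ι)
    (X Y : List ι) : FM K (List ι) :=
  zsgn K (dgp ds X) • R2w K ds dia2 X Y

/-- `ℓ₂(X,Y) = R₂'(X,Y) + (−1)^{deg'X · deg'Y} R₂'(Y,X)` -/
def ell2 (K : Type) [Field K] (ds : ι → ℤ) (dia2 : ι → ι → FM K ι)
    (X Y : List ι) : FM K (List ι) :=
  R2p K ds dia2 X Y + zsgn K (dgp ds X * dgp ds Y) • R2p K ds dia2 Y X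

/-- the coderivation `R` of `H[1] ⊗ S(H[1])` extending `R₂'`:
`R(X₀⊗X₁⋯Xₙ) = Σ_i ± R₂'(X₀,X_i)⊗X₁⋯î⋯Xₙ + (−1)^{x₀'} Σ_{i<j} ± X₀⊗ℓ₂(X_i,X_j)·X₁⋯îĵ⋯Xₙ` -/
def RB (K : Type) [Field K] (ds : ι → ℤ) (dia2 : ι → ι → FM K ι) (b : BB ι) :
    FM K (BB ι) :=
  fsum (focuses b.2) (fun t =>
    zsgn K (dgp ds t.2.1 * dsum (dgp ds) t.1) •
      (R2p K ds dia2 b.1 t.2.1).sum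
        (fun w c => c • Finsupp.single (w, t.1 ++ t.2.2) 1))
  + zsgn K (dgp ds b.1) • fsum (focuses b.2) (fun t1 =>
      fsum (focuses t1.2.2) (fun t2 =>
        zsgn K (dgp ds t1.2.1 * dsum (dgp ds) t1.1
            + dgp ds t2.2.1 * (dsum (dgp ds) t1.1 + dsum (dgp ds) t2.1)) •
          (ell2 K ds dia2 t1.2.1 t2.2.1).sum
            (fun w c => c • Finsupp.single (b.1, w :: (t1.1 ++ t2.1 ++ t2.2.2)) 1)))

/-- the Leibniz-type coproduct `κ` on `H[1] ⊗ S(H[1])`: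
`κ(X₀⊗X₁⋯Xₙ) = Σ_{U₀⊗V₀=X₀, I⊔J} (−1)^{u₀'} ( ε (U₀⊗X_I) ⊗ μV₀·X_J
+ ε (μV₀⊗X_J) ⊗ U₀·X_I ) + (−1)^{x₀'} X₀⊗κ'(X₁⋯Xₙ)` -/
def kappaB (K : Type) [Field K] (ds : ι → ℤ) (b : BB ι) :
    FM K (BB ι × BB ι) :=
  fsum (cuts b.1) (fun uv =>
    fsum (splits K (dgp ds) b.2) (fun t =>
      (zsgn K (dgp ds uv.1) * t.2.2 * zsgn K (dgp ds uv.2 * dsum (dgp ds) t.1)) •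
        Finsupp.mapDomain (fun e => ((uv.1, t.1), e))
          (symEmbV K ds (mu K ds uv.2) t.2.1)
      + (zsgn K (dgp ds uv.1) * t.2.2 * zsgn K (dgp ds uv.1 * dgp ds uv.2)
            * zsgn K (dgp ds uv.1 * dsum (dgp ds) t.1)) •
          (mu K ds uv.2).sum (fun m c =>
            c • Finsupp.mapDomain (fun e => ((m, t.1), e))
                  (symEmb K (dgp ds) (uv.1 :: t.2.1)))))
  + zsgn K (dgp ds b.1) • fsum (focuses b.2) (fun tf =>
      fsum (cuts tf.2.1) (fun uv =>
        fsum (splits K (dgp ds) tf.1) (fun tp =>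
          fsum (splits K (dgp ds) tf.2.2) (fun tq =>
            (zsgn K (dsum (dgp ds) tf.1) * zsgn K (dgp ds uv.1)
                * tp.2.2 * tq.2.2
                * zsgn K (dsum (dgp ds) tp.2.1 * dsum (dgp ds) tq.1
                    + dgp ds tf.2.1 * (dsum (dgp ds) tp.2.1 + dsum (dgp ds) tq.1))
                * zsgn K (dsum (dgp ds) tp.2.1 + dsum (dgp ds) tq.1)) •
              (Finsupp.mapDomain (fun e => ((b.1, tp.1 ++ tq.1 ++ [uv.1]), e))
                  (symEmbV K ds (mu K ds uv.2) (tp.2.1 ++ tq.2.1))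
               + zsgn K (dgp ds uv.1 * dgp ds uv.2) •
                  (mu K ds uv.2).sum (fun m c =>
                    c • Finsupp.mapDomain (fun e => ((b.1, tp.1 ++ tq.1 ++ [m]), e))
                          (symEmb K (dgp ds) (uv.1 :: (tp.2.1 ++ tq.2.1)))))))))


/-! ### Auxiliary lemmas for Statement 5 -/

section Stmt5Aux

variable {K : Type} [Field K] {α β γ : Type}

lemma zsgn_zero : zsgn K 0 = 1 := zpow_zero _

lemma zsgn_add (m n : ℤ) : zsgn K (m + n) = zsgn K m * zsgn K n :=
  zpow_add₀ (by norm_num) m n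

lemma zsgn_two_mul (m : ℤ) : zsgn K (2 * m) = 1 := by
  rw [zsgn, zpow_mul]
  norm_num

lemma zsgn_congr {m n : ℤ} (h : 2 ∣ (m - n)) : zsgn K m = zsgn K n := by
  obtain ⟨k, hk⟩ := h
  have : m = n + 2 * k := by omega
  rw [this, zsgn_add, zsgn_two_mul, mul_one]

lemma zsgn_mul_zsgn (m n : ℤ) : zsgn K m * zsgn K n = zsgn K (m + n) :=
  (zsgn_add m n).symm

/-! fsum lemmas -/

variable {M N : Type} [AddCommMonoid M] [AddCommMonoid N]

lemma fsum_nil (f : α → M) : fsum ([] : List α) f = 0 := rfl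

lemma fsum_cons (a : α) (l : List α) (f : α → M) :
    fsum (a :: l) f = f a + fsum l f := by simp [fsum]

lemma fsum_append (l₁ l₂ : List α) (f : α → M) :
    fsum (l₁ ++ l₂) f = fsum l₁ f + fsum l₂ f := by simp [fsum]

lemma fsum_map (g : α → β) (l : List α) (f : β → M) :
    fsum (l.map g) f = fsum l (fun a => f (g a)) := by
  simp [fsum, List.map_map, Function.comp_def]

lemma fsum_congr {l : List α} {f g : α → M} (h : ∀ a ∈ l, f a = g a) :
    fsum l f = fsum l g := by
  unfold fsum
  rw [List.map_congr_left h]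

lemma fsum_add (l : List α) (f g : α → M) :
    fsum l (fun a => f a + g a) = fsum l f + fsum l g := by
  induction l with
  | nil => simp [fsum_nil]
  | cons a l ih => simp [fsum_cons, ih]; abel

lemma map_fsum (L : M →+ N) (l : List α) (f : α → M) :
    L (fsum l f) = fsum l (fun a => L (f a)) := by
  simp [fsum, map_list_sum, List.map_map, Function.comp_def]

lemma lmap_fsum {M N : Type} [AddCommMonoid M] [AddCommMonoid N] [Module K M] [Module K N]
    (L : M →ₗ[K] N) (l : List α) (f : α → M) :
    L (fsum l f) = fsum l (fun a => L (f a)) :=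
  map_fsum L.toAddMonoidHom l f

lemma smul_fsum {M : Type} [AddCommMonoid M] [Module K M] (c : K) (l : List α) (f : α → M) :
    c • fsum l f = fsum l (fun a => c • f a) := by
  simp [fsum, List.smul_sum, List.map_map, Function.comp_def]

/-! extL lemmas -/

@[simp] lemma extL_single (f : α → FM K β) (a : α) (c : K) :
    extL f (Finsupp.single a c) = c • f a := by
  rw [extL, Finsupp.lift_apply, Finsupp.sum_single_index]
  simp

lemma extL_comm (L : FM K β →ₗ[K] FM K γ) (f : α → FM K β) (x : FM K α) :
    L (extL f x) = extL (fun a => L (f a)) x := by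
  induction x using Finsupp.induction_linear with
  | zero => simp
  | add a b ha hb => simp [map_add, ha, hb]
  | single a b => simp

lemma mapDomain_eq_extL (g : α → β) (x : FM K α) :
    Finsupp.mapDomain g x = extL (fun a => Finsupp.single (g a) (1 : K)) x := by
  induction x using Finsupp.induction_linear with
  | zero => simp
  | add a b ha hb => simp [Finsupp.mapDomain_add, ha, hb]
  | single a b => simp [Finsupp.mapDomain_single, Finsupp.smul_single]

lemma extL_extL (f : β → FM K γ) (g : α → FM K β) (x : FM K α) :
    extL f (extL g x) = extL (fun a => extL f (g a)) x :=
  extL_comm (extL f) g x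

lemma extL_mapDomain (f : β → FM K γ) (g : α → β) (x : FM K α) :
    extL f (Finsupp.mapDomain g x) = extL (fun a => f (g a)) x := by
  rw [mapDomain_eq_extL, extL_extL]
  simp

lemma extL_smul_fun (z : K) (f : α → FM K β) (x : FM K α) :
    extL (fun a => z • f a) x = z • extL f x := by
  induction x using Finsupp.induction_linear with
  | zero => simp
  | add a b ha hb => simp [map_add, ha, hb, smul_add]
  | single a b => simp [smul_comm b z]

lemma extL_add_fun (f g : α → FM K β) (x : FM K α) :
    extL (fun a => f a + g a) x = extL f x + extL g x := by
  induction x using Finsupp.induction_linear with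
  | zero => simp
  | add a b ha hb => simp only [map_add, ha, hb]; abel
  | single a b => simp [smul_add]

lemma extL_zero_fun (x : FM K α) : extL (fun _ : α => (0 : FM K β)) x = 0 := by
  induction x using Finsupp.induction_linear with
  | zero => simp
  | add a b ha hb => simp [map_add, ha, hb]
  | single a b => simp

lemma extL_congr_support {f g : α → FM K β} {x : FM K α}
    (h : ∀ a ∈ x.support, f a = g a) : extL f x = extL g x := by
  rw [extL, Finsupp.lift_apply, extL, Finsupp.lift_apply]
  exact Finsupp.sum_congr fun a ha => by rw [h a ha]

lemma extL_fubini (u : α → β → FM K γ) (x : FM K α) (y : FM K β) :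
    extL (fun a => extL (fun b => u a b) y) x
      = extL (fun b => extL (fun a => u a b) x) y := by
  induction x using Finsupp.induction_linear with
  | zero => simp [extL_zero_fun]
  | add a b ha hb =>
      simp only [map_add, ha, hb]
      rw [← extL_add_fun]
  | single a c =>
      simp only [extL_single]
      rw [← extL_smul_fun]

/-- specializations to free modules (so that `rw` sees syntactically-matching instances) -/
lemma smul_fsumF (c : K) (l : List α) (f : α → FM K γ) :
    c • fsum l f = fsum l (fun a => c • f a) := smul_fsum c l f

lemma fsum_addF (l : List α) (f g : α → FM K γ) :
    fsum l (fun a => f a + g a) = fsum l f + fsum l g := fsum_add l f g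

end Stmt5Aux
section Stmt5Comb

variable {K : Type} [Field K] {α : Type} (dg : α → ℤ)

lemma dsum_nil : dsum dg ([] : List α) = 0 := rfl

lemma dsum_cons (a : α) (l : List α) : dsum dg (a :: l) = dg a + dsum dg l := by
  simp [dsum]

lemma symEmb_nil : symEmb K dg ([] : List α) = 0 := rfl

lemma symEmb_cons (a : α) (l : List α) :
    symEmb K dg (a :: l) = Finsupp.single (a, l) 1
      + extL (fun b => zsgn K (dg b.1 * dg a) • Finsupp.single (b.1, a :: b.2) (1 : K))
          (symEmb K dg l) := by
  rw [symEmb, extL, Finsupp.lift_apply]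
  congr 1
  exact Finsupp.sum_congr fun b _ => by rw [mul_smul]

lemma symEmb_homog :
    ∀ (J : List α), ∀ e ∈ (symEmb K dg J).support, dg e.1 + dsum dg e.2 = dsum dg J := by
  classical
  intro J
  induction J with
  | nil => simp [symEmb_nil]
  | cons a l ih =>
      intro e he
      rw [symEmb_cons] at he
      rcases Finset.mem_union.mp (Finsupp.support_add he) with h | h
      · have : e = (a, l) := Finset.mem_singleton.mp (Finsupp.support_single_subset h)
        subst this
        simp [dsum_cons]
      · rw [extL, Finsupp.lift_apply] at h
        have h2 := Finsupp.support_sum h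
        rcases Finset.mem_biUnion.mp h2 with ⟨b, hb, hbe⟩
        have hbe2 : e ∈ (Finsupp.single (b.1, a :: b.2) (1 : K)).support :=
          Finsupp.support_smul (Finsupp.support_smul hbe)
        have : e = (b.1, a :: b.2) := Finset.mem_singleton.mp
          (Finsupp.support_single_subset hbe2)
        subst this
        have hb' := ih b hb
        simp only [dsum_cons] at *
        omega

lemma splits_nil : splits K dg ([] : List α) = [([], [], 1)] := rfl

lemma splits_cons (a : α) (l : List α) :
    splits K dg (a :: l)
      = ((splits K dg l).map (fun t => (a :: t.1, t.2.1, t.2.2)))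
        ++ ((splits K dg l).map
            (fun t => (t.1, a :: t.2.1, zsgn K (dg a * dsum dg t.1) * t.2.2))) := rfl

lemma permDelta_expand (b : α × List α) :
    permDelta K dg b
      = fsum (splits K dg b.2) (fun t =>
          t.2.2 • Finsupp.mapDomain (fun e => ((b.1, t.1), e)) (symEmb K dg t.2.1)) := by
  rw [permDelta]
  apply fsum_congr
  rintro ⟨I, J, c⟩ _
  cases J with
  | nil => simp [symEmb_nil]
  | cons x xs => rfl

lemma splits_swap {M : Type} [AddCommMonoid M] [Module K M] :
    ∀ (w : List α) (f : List α → List α → M),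
    fsum (splits K dg w) (fun s => s.2.2 • f s.1 s.2.1)
      = fsum (splits K dg w)
          (fun s => (zsgn K (dsum dg s.1 * dsum dg s.2.1) * s.2.2) • f s.2.1 s.1) := by
  intro w
  induction w with
  | nil =>
      intro f
      simp [splits_nil, fsum, dsum_nil, zsgn_zero]
  | cons a l ih =>
      intro f
      rw [splits_cons, fsum_append, fsum_append, fsum_map, fsum_map, fsum_map, fsum_map]
      have hA : fsum (splits K dg l) (fun s => s.2.2 • f (a :: s.1) s.2.1)
          = fsum (splits K dg l)
              (fun s => (zsgn K (dsum dg s.1 * dsum dg (a :: s.2.1)) *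
                  (zsgn K (dg a * dsum dg s.1) * s.2.2)) • f (a :: s.2.1) s.1) := by
        rw [ih (fun I J => f (a :: I) J)]
        apply fsum_congr
        intro s _
        congr 1
        rw [dsum_cons, ← mul_assoc, zsgn_mul_zsgn]
        congr 1
        apply zsgn_congr
        exact ⟨-(dg a * dsum dg s.1), by ring⟩
      have hB : fsum (splits K dg l)
            (fun s => (zsgn K (dg a * dsum dg s.1) * s.2.2) • f s.1 (a :: s.2.1))
          = fsum (splits K dg l)
              (fun s => (zsgn K (dsum dg (a :: s.1) * dsum dg s.2.1) * s.2.2) •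
                  f s.2.1 (a :: s.1)) := by
        have e1 : fsum (splits K dg l)
              (fun s => (zsgn K (dg a * dsum dg s.1) * s.2.2) • f s.1 (a :: s.2.1))
            = fsum (splits K dg l)
              (fun s => s.2.2 • (zsgn K (dg a * dsum dg s.1) • f s.1 (a :: s.2.1))) := by
          apply fsum_congr
          intro s _
          rw [smul_smul, mul_comm]
        rw [e1, ih (fun I J => zsgn K (dg a * dsum dg I) • f I (a :: J))]
        apply fsum_congr
        intro s _
        rw [smul_smul, mul_right_comm]
        congr 1
        rw [zsgn_mul_zsgn, dsum_cons]
        congr 1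
        ring_nf
      rw [hA, hB, add_comm]

end Stmt5Comb
section Stmt5A0

variable {K : Type} [Field K] {α β γ : Type}

lemma mapDomain_extL (g : β → γ) (f : α → FM K β) (x : FM K α) :
    Finsupp.mapDomain g (extL f x) = extL (fun a => Finsupp.mapDomain g (f a)) x := by
  induction x using Finsupp.induction_linear with
  | zero => simp
  | add a b ha hb => simp [map_add, Finsupp.mapDomain_add, ha, hb]
  | single a b => simp [Finsupp.mapDomain_smul]

variable (dg : α → ℤ)

/-- mark an element of the second part then split the remainder -/
def mrk (K : Type) [Field K] (dg : α → ℤ) (e : α × List α) :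
    FM K ((α × List α) × List α) :=
  fsum (splits K dg e.2) (fun t => t.2.2 • Finsupp.single ((e.1, t.1), t.2.1) (1 : K))

def psi2 (K : Type) [Field K] (dg : α → ℤ) (a : α) :
    FM K ((α × List α) × List α) →ₗ[K] FM K ((α × List α) × List α) :=
  extL (fun p => zsgn K (dg p.1.1 * dg a) •
    Finsupp.single ((p.1.1, a :: p.1.2), p.2) (1 : K))

def psi3 (K : Type) [Field K] (dg : α → ℤ) (a : α) :
    FM K ((α × List α) × List α) →ₗ[K] FM K ((α × List α) × List α) :=
  extL (fun p => (zsgn K (dg p.1.1 * dg a) * zsgn K (dg a * dsum dg p.1.2)) •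
    Finsupp.single ((p.1.1, p.1.2), a :: p.2) (1 : K))

lemma mrk_cons (h a : α) (P : List α) :
    mrk K dg (h, a :: P)
      = fsum (splits K dg P)
          (fun t => t.2.2 • Finsupp.single ((h, a :: t.1), t.2.1) (1 : K))
        + fsum (splits K dg P)
          (fun t => (zsgn K (dg a * dsum dg t.1) * t.2.2) •
            Finsupp.single ((h, t.1), a :: t.2.1) (1 : K)) := by
  rw [mrk, splits_cons, fsum_append, fsum_map, fsum_map]

lemma key_cons (a : α) (b : α × List α) :
    zsgn K (dg b.1 * dg a) • mrk K dg (b.1, a :: b.2)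
      = psi2 K dg a (mrk K dg b) + psi3 K dg a (mrk K dg b) := by
  rw [mrk_cons, smul_add, mrk, psi2, psi3, lmap_fsum, lmap_fsum]
  congr 1
  · rw [smul_fsumF]
    apply fsum_congr
    intro t _
    rw [map_smul, extL_single, one_smul, smul_comm]
  · rw [smul_fsumF]
    apply fsum_congr
    intro t _
    simp only [map_smul, extL_single, one_smul, smul_smul]
    congr 1
    ring

lemma claim3 (a : α) (Q s1 : List α) :
    extL (fun b : α × List α =>
        (zsgn K (dg b.1 * dg a) * zsgn K (dg a * dsum dg b.2)) •
          Finsupp.single ((b.1, b.2), a :: Q) (1 : K)) (symEmb K dg s1)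
      = zsgn K (dg a * dsum dg s1) •
          Finsupp.mapDomain (fun e => (e, a :: Q)) (symEmb K dg s1) := by
  rw [mapDomain_eq_extL, ← extL_smul_fun]
  apply extL_congr_support
  intro b hb
  have h := symEmb_homog dg s1 b hb
  have hc : zsgn K (dg b.1 * dg a) * zsgn K (dg a * dsum dg b.2)
      = zsgn K (dg a * dsum dg s1) := by
    rw [zsgn_mul_zsgn]
    congr 1
    rw [← h]
    ring
  rw [hc]

/-- the `symEmb` / `splits` exchange law -/
lemma lemA0 :
    ∀ (w : List α),
    extL (mrk K dg) (symEmb K dg w)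
      = fsum (splits K dg w)
          (fun s => s.2.2 • Finsupp.mapDomain (fun e => (e, s.2.1)) (symEmb K dg s.1)) := by
  intro w
  induction w with
  | nil => simp [symEmb_nil, splits_nil, fsum]
  | cons a l ih =>
      -- left-hand side
      have hL : extL (mrk K dg) (symEmb K dg (a :: l))
          = mrk K dg (a, l)
            + (psi2 K dg a (extL (mrk K dg) (symEmb K dg l))
               + psi3 K dg a (extL (mrk K dg) (symEmb K dg l))) := by
        rw [symEmb_cons, map_add, extL_single, one_smul, extL_extL,
            extL_comm (psi2 K dg a), extL_comm (psi3 K dg a), ← extL_add_fun]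
        congr 1
        apply extL_congr_support
        intro b _
        rw [map_smul, extL_single, one_smul]
        exact key_cons dg a b
      rw [hL, ih, splits_cons, fsum_append, fsum_map, fsum_map]
      -- expand the first sum on the right
      have hR1 : fsum (splits K dg l)
            (fun s => s.2.2 • Finsupp.mapDomain (fun e => (e, s.2.1))
              (symEmb K dg (a :: s.1)))
          = mrk K dg (a, l)
            + fsum (splits K dg l) (fun s => s.2.2 •
                extL (fun b : α × List α => zsgn K (dg b.1 * dg a) •
                  Finsupp.single ((b.1, a :: b.2), s.2.1) (1 : K)) (symEmb K dg s.1)) := by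
        rw [mrk, ← fsum_addF]
        apply fsum_congr
        intro s _
        rw [symEmb_cons, Finsupp.mapDomain_add, Finsupp.mapDomain_single, mapDomain_extL,
            smul_add]
        have hfun : (fun b : α × List α => Finsupp.mapDomain (fun e => (e, s.2.1))
              (zsgn K (dg b.1 * dg a) • Finsupp.single (b.1, a :: b.2) (1 : K)))
            = (fun b : α × List α =>
                zsgn K (dg b.1 * dg a) • Finsupp.single ((b.1, a :: b.2), s.2.1) (1 : K)) := by
          funext b
          rw [Finsupp.mapDomain_smul, Finsupp.mapDomain_single]
        rw [hfun]
      rw [hR1]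
      -- identify the psi2 piece
      have hP2 : psi2 K dg a (fsum (splits K dg l)
            (fun s => s.2.2 • Finsupp.mapDomain (fun e => (e, s.2.1)) (symEmb K dg s.1)))
          = fsum (splits K dg l) (fun s => s.2.2 •
              extL (fun b : α × List α => zsgn K (dg b.1 * dg a) •
                Finsupp.single ((b.1, a :: b.2), s.2.1) (1 : K)) (symEmb K dg s.1)) := by
        rw [lmap_fsum]
        apply fsum_congr
        intro s _
        rw [map_smul, psi2, extL_mapDomain]
      -- identify the psi3 piece
      have hP3 : psi3 K dg a (fsum (splits K dg l)
            (fun s => s.2.2 • Finsupp.mapDomain (fun e => (e, s.2.1)) (symEmb K dg s.1)))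
          = fsum (splits K dg l)
              (fun s => (zsgn K (dg a * dsum dg s.1) * s.2.2) •
                Finsupp.mapDomain (fun e => (e, a :: s.2.1)) (symEmb K dg s.1)) := by
        rw [lmap_fsum]
        apply fsum_congr
        intro s _
        rw [map_smul, psi3, extL_mapDomain]
        rw [claim3 dg a s.2.1 s.1, smul_smul, mul_comm]
      rw [hP2, hP3]
      abel
end Stmt5A0
section Stmt5Final

variable {K : Type} [Field K] {α : Type} (dg : α → ℤ)

/-- `symEmb J₁ ⊗ symEmb J₂` inside the free module on pairs -/
def EEx (K : Type) [Field K] (dg : α → ℤ) (J1 J2 : List α) :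
    FM K ((α × List α) × (α × List α)) :=
  extL (fun e1 => Finsupp.mapDomain (fun e2 => (e1, e2)) (symEmb K dg J2))
    (symEmb K dg J1)

lemma lemA (w : List α) :
    extL (permDelta K dg) (symEmb K dg w)
      = fsum (splits K dg w) (fun s => s.2.2 • EEx K dg s.1 s.2.1) := by
  have h := congrArg
    (extL (fun p : (α × List α) × List α =>
      Finsupp.mapDomain (fun e2 => (p.1, e2)) (symEmb K dg p.2))) (lemA0 dg w)
  rw [extL_extL] at h
  have hmrk : ∀ e : α × List α,
      extL (fun p : (α × List α) × List α =>
          Finsupp.mapDomain (fun e2 => (p.1, e2)) (symEmb K dg p.2)) (mrk K dg e)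
        = permDelta K dg e := by
    intro e
    rw [mrk, lmap_fsum, permDelta_expand]
    apply fsum_congr
    intro t _
    rw [map_smul, extL_single, one_smul]
  rw [show (fun a : α × List α => (extL fun p : (α × List α) × List α =>
        Finsupp.mapDomain (fun e2 => (p.1, e2)) (symEmb K dg p.2)) (mrk K dg a))
      = permDelta K dg from funext hmrk] at h
  rw [lmap_fsum] at h
  rw [h]
  apply fsum_congr
  intro s _
  rw [map_smul, extL_mapDomain, EEx]

lemma lemD (J1 J2 : List α) :
    tauP K (fun p : α × List α => dg p.1 + dsum dg p.2) (EEx K dg J1 J2)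
      = zsgn K (dsum dg J1 * dsum dg J2) • EEx K dg J2 J1 := by
  set dP : α × List α → ℤ := fun p => dg p.1 + dsum dg p.2 with hdP
  rw [EEx, extL_comm]
  have step : ∀ e1 : α × List α,
      tauP K dP (Finsupp.mapDomain (fun e2 => (e1, e2)) (symEmb K dg J2))
        = extL (fun e2 => zsgn K (dP e1 * dP e2) •
            Finsupp.single (e2, e1) (1 : K)) (symEmb K dg J2) := by
    intro e1
    rw [tauP, extL_mapDomain]
  rw [show (fun e1 : α × List α => tauP K dP
        (Finsupp.mapDomain (fun e2 => (e1, e2)) (symEmb K dg J2)))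
      = (fun e1 => extL (fun e2 => zsgn K (dP e1 * dP e2) •
          Finsupp.single (e2, e1) (1 : K)) (symEmb K dg J2)) from funext step]
  have hcongr : extL (fun e1 : α × List α => extL (fun e2 : α × List α =>
        zsgn K (dP e1 * dP e2) • Finsupp.single (e2, e1) (1 : K)) (symEmb K dg J2))
        (symEmb K dg J1)
      = extL (fun e1 : α × List α => extL (fun e2 : α × List α =>
          zsgn K (dsum dg J1 * dsum dg J2) • Finsupp.single (e2, e1) (1 : K))
            (symEmb K dg J2)) (symEmb K dg J1) := by
    apply extL_congr_support
    intro e1 he1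
    apply extL_congr_support
    intro e2 he2
    rw [hdP]
    simp only
    rw [symEmb_homog dg J1 e1 he1, symEmb_homog dg J2 e2 he2]
  rw [hcongr]
  have hpull : extL (fun e1 : α × List α => extL (fun e2 : α × List α =>
        zsgn K (dsum dg J1 * dsum dg J2) • Finsupp.single (e2, e1) (1 : K))
          (symEmb K dg J2)) (symEmb K dg J1)
      = zsgn K (dsum dg J1 * dsum dg J2) •
          extL (fun e1 : α × List α => extL (fun e2 : α × List α =>
            Finsupp.single (e2, e1) (1 : K)) (symEmb K dg J2)) (symEmb K dg J1) := by
    rw [← extL_smul_fun]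
    congr 1
    congr 1
    funext e1
    rw [← extL_smul_fun]
  rw [hpull, extL_fubini (fun e1 e2 => Finsupp.single (e2, e1) (1 : K))]
  congr 1
  rw [EEx]
  apply extL_congr_support
  intro e2 _
  rw [mapDomain_eq_extL]

lemma lemB (J : List α) :
    tauP K (fun p : α × List α => dg p.1 + dsum dg p.2)
        (extL (permDelta K dg) (symEmb K dg J))
      = extL (permDelta K dg) (symEmb K dg J) := by
  rw [lemA, lmap_fsum]
  have h1 : fsum (splits K dg J) (fun s => tauP K
        (fun p : α × List α => dg p.1 + dsum dg p.2) (s.2.2 • EEx K dg s.1 s.2.1))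
      = fsum (splits K dg J)
          (fun s => (zsgn K (dsum dg s.1 * dsum dg s.2.1) * s.2.2) • EEx K dg s.2.1 s.1) := by
    apply fsum_congr
    intro s _
    rw [map_smul, lemD, smul_smul, mul_comm]
  rw [h1, ← splits_swap dg J (EEx K dg)]

lemma tau23_mapDomain {β : Type} (dgp : β → ℤ) (x : β) (y : FM K (β × β)) :
    tau23 K dgp (Finsupp.mapDomain (fun q => (x, q)) y)
      = Finsupp.mapDomain (fun q : β × β => (x, q)) (tauP K dgp y) := by
  rw [tau23, tauP, extL_mapDomain, mapDomain_extL]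
  apply extL_congr_support
  intro q _
  rw [Finsupp.mapDomain_smul, Finsupp.mapDomain_single]

lemma main_single (p : α × List α) :
    secondT (fun q : α × List α => dg q.1 + dsum dg q.2) 0 (permDelta K dg)
        (permDelta K dg p)
      = tau23 K (fun q : α × List α => dg q.1 + dsum dg q.2)
          (secondT (fun q : α × List α => dg q.1 + dsum dg q.2) 0 (permDelta K dg)
            (permDelta K dg p)) := by
  have hsec : ∀ y : FM K ((α × List α) × (α × List α)),
      secondT (fun q : α × List α => dg q.1 + dsum dg q.2) 0 (permDelta K dg) y
        = extL (fun p' : (α × List α) × (α × List α) =>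
            Finsupp.mapDomain (fun q : (α × List α) × (α × List α) => (p'.1, q))
              (permDelta K dg p'.2)) y := by
    intro y
    rw [secondT]
    congr 1
    congr 1
    funext p'
    rw [zero_mul, zsgn_zero, one_smul]
  have hexp : secondT (fun q : α × List α => dg q.1 + dsum dg q.2) 0 (permDelta K dg)
        (permDelta K dg p)
      = fsum (splits K dg p.2) (fun t => t.2.2 •
          Finsupp.mapDomain (fun q : (α × List α) × (α × List α) => ((p.1, t.1), q))
            (extL (permDelta K dg) (symEmb K dg t.2.1))) := by
    rw [hsec, permDelta_expand, lmap_fsum]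
    apply fsum_congr
    intro t _
    rw [map_smul, extL_mapDomain, mapDomain_extL]
  rw [hexp, lmap_fsum]
  apply fsum_congr
  intro t _
  rw [map_smul, tau23_mapDomain, lemB]

end Stmt5Final
set_option maxRecDepth 8000 in
/-- Let `V` be a ℤ-graded vector space (free on a homogeneous
basis `ι` with degrees `dI`).  The coproduct `Δ` on `V[1]⊗S(V[1])` (modelled on
pairs (head, list of factors), with the graded-symmetry relations in the list
part) defined by `Δ(x⊗1) = 0` and
`Δ(x₀⊗x₁⋯xₙ) = Σ_{k,σ∈Sh_{k,1,n−k−1}} ε_x(σ) x₀⊗(x_{σ(1)}⋯x_{σ(k)}) ⊗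
x_{σ(k+1)}⊗(x_{σ(k+2)}⋯x_{σ(n)})` satisfies the permutative cogebra identity
`(id⊗Δ)∘Δ = τ₂₃∘(id⊗Δ)∘Δ`. -/
theorem stmt5 (K ι : Type) [Field K] (dI : ι → ℤ) :
    -- `ds` is the shifted degree `deg(x) = |x| − 1` on `V[1]`,
    -- `degP` the induced degree on `V[1]⊗S(V[1])`
    ∀ ds : ι → ℤ, ds = (fun i => dI i - 1) →
    ∀ degP : ι × List ι → ℤ, degP = (fun p => ds p.1 + dsum ds p.2) →
    ∀ x : FM K (ι × List ι),
      secondT degP 0 (permDelta K ds) (extL (permDelta K ds) x)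
        - tau23 K degP (secondT degP 0 (permDelta K ds) (extL (permDelta K ds) x))
        ∈ idealTriple (symRelP K ds) := by
  intro ds _ degP hdegP x
  subst hdegP
  have hmain : secondT (fun p : ι × List ι => ds p.1 + dsum ds p.2) 0 (permDelta K ds)
        (extL (permDelta K ds) x)
      = tau23 K (fun p : ι × List ι => ds p.1 + dsum ds p.2)
          (secondT (fun p : ι × List ι => ds p.1 + dsum ds p.2) 0 (permDelta K ds)
            (extL (permDelta K ds) x)) := by
    induction x using Finsupp.induction_linear with
    | zero =>
        have h1 : (extL (permDelta K ds)) (0 : FM K (ι × List ι)) = 0 := map_zero _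
        have h2 : (secondT (fun p : ι × List ι => ds p.1 + dsum ds p.2) 0
            (permDelta K ds)) (0 : FM K ((ι × List ι) × (ι × List ι))) = 0 := map_zero _
        rw [h1, h2]
        exact (map_zero _).symm
    | add f g hf hg =>
        have a1 : (extL (permDelta K ds)) (f + g)
            = (extL (permDelta K ds)) f + (extL (permDelta K ds)) g := map_add _ _ _
        rw [a1,
          map_add (secondT (fun p : ι × List ι => ds p.1 + dsum ds p.2) 0 (permDelta K ds)),
          map_add (tau23 K (fun p : ι × List ι => ds p.1 + dsum ds p.2))]
        exact congrArg₂ (· + ·) hf hg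
    | single a b =>
        rw [extL_single, map_smul, map_smul]
        exact congrArg (fun y => b • y) (main_single ds a)
  rw [sub_eq_zero_of_eq hmain]
  exact Submodule.zero_mem _

end PG
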